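/- Let 0 < λ, μ ≤ 1 with λ + μ > 1, let f : [a,b] → ℝ be λ-Hölder continuous and g : [a,b] → ℝ be μ-Hölder continuous. Then for every ε > 0 there is δ > 0 such that for every partition a = t₀ < t₁ < ⋯ < t_n = b of mesh less than δ and every choice of tags ξ_i ∈ [t_i, t_{i+1}] (0 ≤ i ≤ n−1), one has |Σ_{i=0}^{n−1} f(ξ_i)(g(t_{i+1}) − g(t_i)) − ∫_a^b f dg| < ε; that is, tagged Riemann sums with arbitrary tags converge to the Young integral as the mesh tends to 0. -/

import Mathlib

open Set MeasureTheory Filter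

def HolderOn {B : Type*} [NormedAddCommGroup B] (f : ℝ → B) (a b lam : ℝ) : Prop :=
  ∃ C : ℝ, ∀ s ∈ Icc a b, ∀ t ∈ Icc a b, ‖f t - f s‖ ≤ C * |t - s| ^ lam

def IsYoungIntegral {B : Type*} [NormedAddCommGroup B] [NormedSpace ℝ B]
    (f : ℝ → B) (g : ℝ → ℝ) (a b : ℝ) (I : B) : Prop :=
  ∀ ε > 0, ∃ δ > 0, ∀ (n : ℕ) (t : ℕ → ℝ),
    t 0 = a → t n = b → (∀ i < n, t i < t (i + 1)) → (∀ i < n, t (i + 1) - t i < δ) →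
    ‖(∑ i ∈ Finset.range n, (g (t (i + 1)) - g (t i)) • f (t i)) - I‖ < ε

open Topology

namespace YoungAux

def RS (f g : ℝ → ℝ) (t : ℕ → ℝ) (n : ℕ) : ℝ :=
  ∑ i ∈ Finset.range n, (g (t (i+1)) - g (t i)) * f (t i)

lemma part_mono {α : Type*} [Preorder α] {t : ℕ → α} {n : ℕ} (h : ∀ i < n, t i < t (i+1)) :
    ∀ {i j : ℕ}, i ≤ j → j ≤ n → t i ≤ t j := by
  intro i j hij hj
  induction j with
  | zero =>
    cases Nat.le_zero.mp hij
    exact le_rfl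
  | succ j ih =>
    rcases Nat.eq_or_lt_of_le hij with rfl | h2
    · exact le_rfl
    · exact le_trans (ih (Nat.lt_succ_iff.mp h2) (le_trans (Nat.le_succ j) hj))
        (le_of_lt (h j hj))

lemma part_mem {a b : ℝ} {t : ℕ → ℝ} {n : ℕ} (h : ∀ i < n, t i < t (i+1))
    (h0 : t 0 ∈ Icc a b) (hn : t n ∈ Icc a b) : ∀ i ≤ n, t i ∈ Icc a b := by
  intro i hi
  exact ⟨le_trans h0.1 (part_mono h (Nat.zero_le i) hi),
    le_trans (part_mono h hi le_rfl) hn.2⟩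

section
variable {a b lam mu Cf Cg : ℝ} {f g : ℝ → ℝ}

/-- The Young–Loève estimate. -/
lemma YL (hCf : 0 ≤ Cf) (hCg : 0 ≤ Cg) (hlam0 : 0 < lam) (hmu0 : 0 < mu)
    (hf : ∀ s ∈ Icc a b, ∀ u ∈ Icc a b, |f u - f s| ≤ Cf * |u - s| ^ lam)
    (hg : ∀ s ∈ Icc a b, ∀ u ∈ Icc a b, |g u - g s| ≤ Cg * |u - s| ^ mu) :
    ∀ (n : ℕ) (t : ℕ → ℝ), (∀ i < n, t i < t (i+1)) → (∀ i ≤ n, t i ∈ Icc a b) →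
    |RS f g t n - (g (t n) - g (t 0)) * f (t 0)| ≤
      Cf * Cg * (2:ℝ) ^ (lam+mu) * (∑ k ∈ Finset.range n, (k:ℝ) ^ (-(lam+mu))) *
        (t n - t 0) ^ (lam+mu) := by
  intro n
  induction n with
  | zero => intro t _ _; simp [RS]
  | succ n ih =>
    intro t hmono hmem
    rcases Nat.eq_zero_or_pos n with rfl | hn
    · have h1 : RS f g t 1 = (g (t 1) - g (t 0)) * f (t 0) := by simp [RS]
      have h0 : ((0:ℕ):ℝ) ^ (-(lam+mu)) = 0 := by
        rw [Nat.cast_zero]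
        exact Real.zero_rpow (by intro h; simp at h; linarith)
      rw [h1, sub_self, abs_zero]
      refine mul_nonneg (mul_nonneg (mul_nonneg (mul_nonneg hCf hCg) (by positivity))
        (Finset.sum_nonneg fun k _ => Real.rpow_nonneg (Nat.cast_nonneg k) _))
        (Real.rpow_nonneg (by linarith [hmono 0 Nat.zero_lt_one]) _)
    -- n ≥ 1, total intervals n+1 ≥ 2
    have hθ : (0:ℝ) < lam + mu := by linarith
    obtain ⟨j, hjmem, hjmin⟩ := Finset.exists_min_image (Finset.range n)
      (fun j => t (j+2) - t j) ⟨0, Finset.mem_range.mpr hn⟩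
    have hjn : j < n := Finset.mem_range.mp hjmem
    set Δ : ℝ := t (n+1) - t 0 with hΔ
    have hΔ0 : 0 ≤ Δ := by
      have := part_mono hmono (Nat.zero_le (n+1)) le_rfl
      linarith
    set D : ℝ := t (j+2) - t j with hD
    have hD0 : 0 ≤ D := by
      have := part_mono hmono (show j ≤ j+2 by omega) (by omega)
      linarith
    -- average estimate : n * D ≤ 2 Δ
    have havg : (n:ℝ) * D ≤ 2 * Δ := by
      have h1 : ∑ k ∈ Finset.range n, (t (k+2) - t (k+1)) = t (n+1) - t 1 := by
        have := Finset.sum_range_sub (fun i => t (i+1)) n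
        simpa using this
      have h2 : ∑ k ∈ Finset.range n, (t (k+1) - t k) = t n - t 0 :=
        Finset.sum_range_sub t n
      have h3 : ∑ k ∈ Finset.range n, (t (k+2) - t k) = (t (n+1) - t 1) + (t n - t 0) := by
        rw [← h1, ← h2, ← Finset.sum_add_distrib]
        apply Finset.sum_congr rfl
        intro k _; ring
      have h4 : (n:ℝ) * D ≤ ∑ k ∈ Finset.range n, (t (k+2) - t k) := by
        calc (n:ℝ) * D = ∑ _k ∈ Finset.range n, D := by
              rw [Finset.sum_const, Finset.card_range, nsmul_eq_mul]
          _ ≤ _ := Finset.sum_le_sum (fun k hk => hjmin k hk)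
      have h5 : t 0 ≤ t 1 := part_mono hmono (Nat.zero_le 1) (by omega)
      have h6 : t n ≤ t (n+1) := part_mono hmono (Nat.le_succ n) le_rfl
      rw [h3] at h4
      simp only [hΔ]
      linarith
    have hDle : D ≤ 2 * Δ / n := by
      rw [le_div_iff₀ (by exact_mod_cast hn)]
      linarith [havg]
    -- the reduced partition
    set t' : ℕ → ℝ := fun i => if i ≤ j then t i else t (i+1) with ht'
    have ht'0 : t' 0 = t 0 := by simp [ht']
    have ht'n : t' n = t (n+1) := by simp [ht', Nat.not_le.mpr hjn]
    have hmono' : ∀ i < n, t' i < t' (i+1) := by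
      intro i hi
      rcases lt_trichotomy i j with h | rfl | h
      · simp only [ht', if_pos (le_of_lt h), if_pos (Nat.succ_le_of_lt h)]
        exact hmono i (by omega)
      · simp only [ht', if_pos le_rfl, if_neg (by omega : ¬ i + 1 ≤ i)]
        exact lt_trans (hmono i (by omega)) (hmono (i+1) (by omega))
      · simp only [ht', if_neg (by omega : ¬ i ≤ j), if_neg (by omega : ¬ i + 1 ≤ j)]
        exact hmono (i+1) (by omega)
    have hmem' : ∀ i ≤ n, t' i ∈ Icc a b := by
      intro i hi
      by_cases h : i ≤ j
      · simpa [ht', h] using hmem i (by omega)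
      · simpa [ht', h] using hmem (i+1) (by omega)
    -- the sum identity
    have key : RS f g t (n+1) - RS f g t' n
        = (g (t (j+2)) - g (t (j+1))) * (f (t (j+1)) - f (t j)) := by
      set u : ℕ → ℝ := fun i => (g (t (i+1)) - g (t i)) * f (t i) with hu
      set v : ℕ → ℝ := fun i => (g (t' (i+1)) - g (t' i)) * f (t' i) with hv
      have eu : RS f g t (n+1)
          = (∑ i ∈ Finset.Ico 0 j, u i) + (u j + u (j+1))
            + ∑ i ∈ Finset.Ico (j+2) (n+1), u i := by
        rw [RS, Finset.range_eq_Ico]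
        rw [← Finset.sum_Ico_consecutive u (Nat.zero_le (j+2)) (by omega : j+2 ≤ n+1)]
        rw [← Finset.sum_Ico_consecutive u (Nat.zero_le j) (by omega : j ≤ j+2)]
        have : ∑ i ∈ Finset.Ico j (j+2), u i = u j + u (j+1) := by
          rw [Finset.sum_Ico_succ_top (by omega), Finset.sum_Ico_succ_top (by omega)]
          simp
        rw [this]
      have ev : RS f g t' n
          = (∑ i ∈ Finset.Ico 0 j, u i) + ((g (t (j+2)) - g (t j)) * f (t j))
            + ∑ i ∈ Finset.Ico (j+2) (n+1), u i := by
        rw [RS, Finset.range_eq_Ico]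
        rw [← Finset.sum_Ico_consecutive v (Nat.zero_le (j+1)) (by omega : j+1 ≤ n)]
        rw [← Finset.sum_Ico_consecutive v (Nat.zero_le j) (by omega : j ≤ j+1)]
        congr 1
        · congr 1
          · apply Finset.sum_congr rfl
            intro i hi
            have hij : i < j := by simpa using (Finset.mem_Ico.mp hi).2
            simp only [hv, hu, ht', if_pos (le_of_lt hij), if_pos (Nat.succ_le_of_lt hij)]
          · rw [Finset.sum_Ico_succ_top (le_rfl)]
            simp only [hv, ht', if_pos le_rfl, if_neg (by omega : ¬ j + 1 ≤ j)]
            simp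
        · rw [Finset.sum_Ico_eq_sum_range, Finset.sum_Ico_eq_sum_range]
          rw [show n - (j+1) = n + 1 - (j+2) from by omega]
          apply Finset.sum_congr rfl
          intro i hi
          simp only [hv, hu, ht']
          rw [if_neg (by omega : ¬ (j + 1 + i + 1 ≤ j)), if_neg (by omega : ¬ (j + 1 + i ≤ j))]
          rw [show j + 1 + i + 1 = j + 2 + i from by omega]
      rw [eu, ev]
      ring
    -- bound the removal error
    have hmemj : t j ∈ Icc a b := hmem j (by omega)
    have hmemj1 : t (j+1) ∈ Icc a b := hmem (j+1) (by omega)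
    have hmemj2 : t (j+2) ∈ Icc a b := hmem (j+2) (by omega)
    have hstep1 : t j < t (j+1) := hmono j (by omega)
    have hstep2 : t (j+1) < t (j+2) := hmono (j+1) (by omega)
    have hgb : |g (t (j+2)) - g (t (j+1))| ≤ Cg * D ^ mu := by
      refine le_trans (hg _ hmemj1 _ hmemj2) ?_
      refine mul_le_mul_of_nonneg_left ?_ hCg
      refine Real.rpow_le_rpow (abs_nonneg _) ?_ (le_of_lt hmu0)
      rw [abs_of_nonneg (by linarith)]
      simp only [hD]; linarith
    have hfb : |f (t (j+1)) - f (t j)| ≤ Cf * D ^ lam := by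
      refine le_trans (hf _ hmemj _ hmemj1) ?_
      refine mul_le_mul_of_nonneg_left ?_ hCf
      refine Real.rpow_le_rpow (abs_nonneg _) ?_ (le_of_lt hlam0)
      rw [abs_of_nonneg (by linarith)]
      simp only [hD]; linarith
    have herr : |(g (t (j+2)) - g (t (j+1))) * (f (t (j+1)) - f (t j))|
        ≤ Cf * Cg * D ^ (lam+mu) := by
      rw [abs_mul]
      calc |g (t (j+2)) - g (t (j+1))| * |f (t (j+1)) - f (t j)|
          ≤ (Cg * D ^ mu) * (Cf * D ^ lam) :=
            mul_le_mul hgb hfb (abs_nonneg _) (by positivity)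
        _ = Cf * Cg * (D ^ lam * D ^ mu) := by ring
        _ = Cf * Cg * D ^ (lam+mu) := by
            rw [← Real.rpow_add' hD0 (ne_of_gt hθ)]
    have hn0 : (0:ℝ) < (n:ℝ) := by exact_mod_cast hn
    have hD2 : D ^ (lam+mu) ≤ 2 ^ (lam+mu) * (n:ℝ) ^ (-(lam+mu)) * Δ ^ (lam+mu) := by
      have h1 : D ^ (lam+mu) ≤ (2*Δ/(n:ℝ)) ^ (lam+mu) :=
        Real.rpow_le_rpow hD0 hDle (le_of_lt hθ)
      have h2 : ((2:ℝ)*Δ/(n:ℝ)) ^ (lam+mu) = ((2:ℝ)*Δ) ^ (lam+mu) / (n:ℝ) ^ (lam+mu) :=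
        Real.div_rpow (by linarith) (le_of_lt hn0) _
      have h3 : ((2:ℝ)*Δ) ^ (lam+mu) = 2 ^ (lam+mu) * Δ ^ (lam+mu) :=
        Real.mul_rpow (by norm_num) hΔ0
      rw [Real.rpow_neg (le_of_lt hn0)]
      rw [h2, h3] at h1
      calc D ^ (lam+mu) ≤ 2 ^ (lam+mu) * Δ ^ (lam+mu) / (n:ℝ) ^ (lam+mu) := h1
        _ = 2 ^ (lam+mu) * ((n:ℝ) ^ (lam+mu))⁻¹ * Δ ^ (lam+mu) := by ring
    have decomp : RS f g t (n+1) - (g (t (n+1)) - g (t 0)) * f (t 0)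
        = (RS f g t' n - (g (t' n) - g (t' 0)) * f (t' 0))
          + (g (t (j+2)) - g (t (j+1))) * (f (t (j+1)) - f (t j)) := by
      rw [ht'0, ht'n]; linarith [key]
    have ihb := ih t' hmono' hmem'
    rw [ht'0, ht'n] at ihb
    calc |RS f g t (n+1) - (g (t (n+1)) - g (t 0)) * f (t 0)|
        = |(RS f g t' n - (g (t' n) - g (t' 0)) * f (t' 0))
          + (g (t (j+2)) - g (t (j+1))) * (f (t (j+1)) - f (t j))| := by rw [decomp]
      _ ≤ |RS f g t' n - (g (t' n) - g (t' 0)) * f (t' 0)|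
          + |(g (t (j+2)) - g (t (j+1))) * (f (t (j+1)) - f (t j))| := abs_add_le _ _
      _ ≤ (Cf * Cg * 2 ^ (lam+mu) * ∑ k ∈ Finset.range n, (k:ℝ) ^ (-(lam+mu)))
            * Δ ^ (lam+mu)
          + Cf * Cg * (2 ^ (lam+mu) * (n:ℝ) ^ (-(lam+mu)) * Δ ^ (lam+mu)) := by
          refine add_le_add ?_ (le_trans herr ?_)
          · rw [ht'0, ht'n]
            exact ihb
          · exact mul_le_mul_of_nonneg_left hD2 (by positivity)
      _ = (Cf * Cg * 2 ^ (lam+mu) * ∑ k ∈ Finset.range (n+1), (k:ℝ) ^ (-(lam+mu)))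
            * Δ ^ (lam+mu) := by
          rw [Finset.sum_range_succ]; push_cast; ring
/-- The Young constant. -/
noncomputable def Kc (Cf Cg th : ℝ) : ℝ := Cf * Cg * 2 ^ th * ∑' k : ℕ, (k:ℝ) ^ (-th)

lemma Kc_nonneg {Cf Cg th : ℝ} (hCf : 0 ≤ Cf) (hCg : 0 ≤ Cg) : 0 ≤ Kc Cf Cg th := by
  refine mul_nonneg (mul_nonneg (mul_nonneg hCf hCg) (by positivity)) ?_
  exact tsum_nonneg fun k => Real.rpow_nonneg (Nat.cast_nonneg k) _

/-- Young–Loève with the summed-up constant. -/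
lemma YL' (hCf : 0 ≤ Cf) (hCg : 0 ≤ Cg) (hlam0 : 0 < lam) (hmu0 : 0 < mu)
    (hsum : 1 < lam + mu)
    (hf : ∀ s ∈ Icc a b, ∀ u ∈ Icc a b, |f u - f s| ≤ Cf * |u - s| ^ lam)
    (hg : ∀ s ∈ Icc a b, ∀ u ∈ Icc a b, |g u - g s| ≤ Cg * |u - s| ^ mu)
    (n : ℕ) (t : ℕ → ℝ) (hmono : ∀ i < n, t i < t (i+1)) (hmem : ∀ i ≤ n, t i ∈ Icc a b) :
    |RS f g t n - (g (t n) - g (t 0)) * f (t 0)| ≤ Kc Cf Cg (lam+mu) * (t n - t 0) ^ (lam+mu) := by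
  refine le_trans (YL hCf hCg hlam0 hmu0 hf hg n t hmono hmem) ?_
  rw [Kc]
  have hΔ0 : (0:ℝ) ≤ t n - t 0 := by
    have := part_mono hmono (Nat.zero_le n) le_rfl; linarith
  refine mul_le_mul_of_nonneg_right ?_ (Real.rpow_nonneg hΔ0 _)
  refine mul_le_mul_of_nonneg_left ?_ (by positivity)
  exact Summable.sum_le_tsum (Finset.range n) (fun k _ => Real.rpow_nonneg (Nat.cast_nonneg k) _)
    (Real.summable_nat_rpow.mpr (by linarith))

/-- Refinement estimate. -/
lemma refine_est (hCf : 0 ≤ Cf) (hCg : 0 ≤ Cg) (hlam0 : 0 < lam) (hmu0 : 0 < mu)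
    (hsum : 1 < lam + mu)
    (hf : ∀ s ∈ Icc a b, ∀ u ∈ Icc a b, |f u - f s| ≤ Cf * |u - s| ^ lam)
    (hg : ∀ s ∈ Icc a b, ∀ u ∈ Icc a b, |g u - g s| ≤ Cg * |u - s| ^ mu) :
    ∀ (m : ℕ) (σ : ℕ → ℕ) (N : ℕ) (r : ℕ → ℝ),
    (∀ i < N, r i < r (i+1)) → (∀ i ≤ N, r i ∈ Icc a b) →
    σ 0 = 0 → σ m = N → (∀ i < m, σ i < σ (i+1)) →
    |RS f g r N - RS f g (fun i => r (σ i)) m| ≤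
      Kc Cf Cg (lam+mu) * ∑ i ∈ Finset.range m, (r (σ (i+1)) - r (σ i)) ^ (lam+mu) := by
  intro m
  induction m with
  | zero =>
    intro σ N r hmono hmem hσ0 hσm hσmono
    rw [← hσm, hσ0]
    simp [RS]
  | succ m ih =>
    intro σ N r hmono hmem hσ0 hσm hσmono
    have hσle : ∀ {i j : ℕ}, i ≤ j → j ≤ m+1 → σ i ≤ σ j := fun hij hj =>
      part_mono hσmono hij hj
    have hσmN : σ m ≤ N := hσm ▸ hσle (Nat.le_succ m) le_rfl
    set d : ℕ := σ (m+1) - σ m with hdd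
    have hd : σ m + d = σ (m+1) := by
      have : σ m ≤ σ (m+1) := hσle (Nat.le_succ m) le_rfl
      omega
    -- split the fine sum
    have split : RS f g r N = RS f g r (σ m)
        + ∑ i ∈ Finset.range d, (g (r (σ m + i + 1)) - g (r (σ m + i))) * f (r (σ m + i)) := by
      rw [← hσm, RS, ← hd, Finset.sum_range_add]
      rfl
    -- the block partition
    set w : ℕ → ℝ := fun i => r (σ m + i) with hw
    have hwm : ∀ i < d, w i < w (i+1) := by
      intro i hi
      have : σ m + i < N := by omega
      simpa [hw, Nat.add_assoc] using hmono _ this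
    have hwmem : ∀ i ≤ d, w i ∈ Icc a b := by
      intro i hi
      exact hmem _ (by omega)
    have hblock := YL' hCf hCg hlam0 hmu0 hsum hf hg d w hwm hwmem
    have hw0 : w 0 = r (σ m) := by simp [hw]
    have hwd : w d = r (σ (m+1)) := by rw [hw]; simp only [hd]
    rw [hw0, hwd] at hblock
    have hblock' : |(∑ i ∈ Finset.range d,
          (g (r (σ m + i + 1)) - g (r (σ m + i))) * f (r (σ m + i)))
        - (g (r (σ (m+1))) - g (r (σ m))) * f (r (σ m))|
        ≤ Kc Cf Cg (lam+mu) * (r (σ (m+1)) - r (σ m)) ^ (lam+mu) := by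
      exact hblock
    -- coarse sum recursion
    have coarse : RS f g (fun i => r (σ i)) (m+1) = RS f g (fun i => r (σ i)) m
        + (g (r (σ (m+1))) - g (r (σ m))) * f (r (σ m)) := by
      rw [RS, Finset.sum_range_succ]; rfl
    have ihb := ih σ (σ m) r (fun i hi => hmono i (by omega)) (fun i hi => hmem i (by omega))
      hσ0 rfl (fun i hi => hσmono i (by omega))
    calc |RS f g r N - RS f g (fun i => r (σ i)) (m+1)|
        = |(RS f g r (σ m) - RS f g (fun i => r (σ i)) m)
            + ((∑ i ∈ Finset.range d,
                (g (r (σ m + i + 1)) - g (r (σ m + i))) * f (r (σ m + i)))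
              - (g (r (σ (m+1))) - g (r (σ m))) * f (r (σ m)))| := by
          rw [split, coarse]; congr 1; ring
      _ ≤ |RS f g r (σ m) - RS f g (fun i => r (σ i)) m|
          + |(∑ i ∈ Finset.range d,
                (g (r (σ m + i + 1)) - g (r (σ m + i))) * f (r (σ m + i)))
              - (g (r (σ (m+1))) - g (r (σ m))) * f (r (σ m))| := abs_add_le _ _
      _ ≤ Kc Cf Cg (lam+mu) * ∑ i ∈ Finset.range m, (r (σ (i+1)) - r (σ i)) ^ (lam+mu)
          + Kc Cf Cg (lam+mu) * (r (σ (m+1)) - r (σ m)) ^ (lam+mu) := add_le_add ihb hblock'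
      _ = Kc Cf Cg (lam+mu)
            * ∑ i ∈ Finset.range (m+1), (r (σ (i+1)) - r (σ i)) ^ (lam+mu) := by
          rw [Finset.sum_range_succ]; ring

end

/-- Common refinement of two partitions. -/
lemma exists_common {a b : ℝ} {n m : ℕ} {t s : ℕ → ℝ}
    (ht0 : t 0 = a) (htn : t n = b) (hs0 : s 0 = a) (hsm : s m = b)
    (htmono : ∀ i < n, t i < t (i+1)) (hsmono : ∀ i < m, s i < s (i+1)) :
    ∃ (N : ℕ) (r : ℕ → ℝ) (σ τ : ℕ → ℕ),
      (∀ i < N, r i < r (i+1)) ∧ r 0 = a ∧ r N = b ∧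
      σ 0 = 0 ∧ σ n = N ∧ (∀ i < n, σ i < σ (i+1)) ∧ (∀ i ≤ n, r (σ i) = t i) ∧
      τ 0 = 0 ∧ τ m = N ∧ (∀ i < m, τ i < τ (i+1)) ∧ (∀ i ≤ m, r (τ i) = s i) := by
  classical
  set A : Finset ℝ := ((Finset.range (n+1)).image t) ∪ ((Finset.range (m+1)).image s) with hA
  have htiA : ∀ i ≤ n, t i ∈ A := fun i hi =>
    Finset.mem_union_left _ (Finset.mem_image.mpr ⟨i, Finset.mem_range.mpr (by omega), rfl⟩)
  have hsiA : ∀ i ≤ m, s i ∈ A := fun i hi =>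
    Finset.mem_union_right _ (Finset.mem_image.mpr ⟨i, Finset.mem_range.mpr (by omega), rfl⟩)
  have haA : a ∈ A := ht0 ▸ htiA 0 (Nat.zero_le n)
  have hbA : b ∈ A := htn ▸ htiA n le_rfl
  have hbound : ∀ x ∈ A, a ≤ x ∧ x ≤ b := by
    intro x hx
    rcases Finset.mem_union.mp hx with h | h
    · obtain ⟨i, hi, rfl⟩ := Finset.mem_image.mp h
      have hi' : i ≤ n := by
        have := Finset.mem_range.mp hi; omega
      exact ⟨ht0 ▸ part_mono htmono (Nat.zero_le i) hi',
        htn ▸ part_mono htmono hi' le_rfl⟩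
    · obtain ⟨i, hi, rfl⟩ := Finset.mem_image.mp h
      have hi' : i ≤ m := by
        have := Finset.mem_range.mp hi; omega
      exact ⟨hs0 ▸ part_mono hsmono (Nat.zero_le i) hi',
        hsm ▸ part_mono hsmono hi' le_rfl⟩
  have hk : 0 < A.card := Finset.card_pos.mpr ⟨a, haA⟩
  set k := A.card with hkk
  let e : Fin k ≃o A := A.orderIsoOfFin hkk.symm
  have hkN : k - 1 < k := by omega
  set r : ℕ → ℝ := fun i => if h : i < k then (e ⟨i, h⟩ : ℝ) else b with hr
  set σ : ℕ → ℕ := fun i => if h : t i ∈ A then ((e.symm ⟨t i, h⟩ : Fin k) : ℕ) else 0 with hσ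
  set τ : ℕ → ℕ := fun i => if h : s i ∈ A then ((e.symm ⟨s i, h⟩ : Fin k) : ℕ) else 0 with hτ
  have h0a : (e ⟨0, hk⟩ : ℝ) = a := by
    refine le_antisymm ?_ (hbound _ (e ⟨0, hk⟩).2).1
    have h1 : (⟨0, hk⟩ : Fin k) ≤ e.symm ⟨a, haA⟩ := by
      simp [Fin.le_def]
    have h2 := e.monotone h1
    rw [e.apply_symm_apply] at h2
    exact_mod_cast h2
  have hNb : (e ⟨k - 1, hkN⟩ : ℝ) = b := by
    refine le_antisymm (hbound _ (e ⟨k - 1, hkN⟩).2).2 ?_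
    have h1 : e.symm ⟨b, hbA⟩ ≤ (⟨k - 1, hkN⟩ : Fin k) := by
      simp only [Fin.le_def]
      have := (e.symm ⟨b, hbA⟩).2
      omega
    have h2 := e.monotone h1
    rw [e.apply_symm_apply] at h2
    exact_mod_cast h2
  have symm0 : ∀ (x : ℝ) (hx : x ∈ A), x = a → ((e.symm ⟨x, hx⟩ : Fin k) : ℕ) = 0 := by
    intro x hx hxa
    have h1 : (⟨x, hx⟩ : A) ≤ e ⟨0, hk⟩ := by
      rw [← Subtype.coe_le_coe, h0a]
      exact le_of_eq hxa
    have h2 := e.symm.monotone h1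
    rw [e.symm_apply_apply] at h2
    simpa [Fin.le_def] using h2
  have symmN : ∀ (x : ℝ) (hx : x ∈ A), x = b → ((e.symm ⟨x, hx⟩ : Fin k) : ℕ) = k - 1 := by
    intro x hx hxb
    have h1 : e ⟨k - 1, hkN⟩ ≤ (⟨x, hx⟩ : A) := by
      rw [← Subtype.coe_le_coe, hNb]
      exact le_of_eq hxb.symm
    have h2 := e.symm.monotone h1
    rw [e.symm_apply_apply] at h2
    simp only [Fin.le_def] at h2
    have := (e.symm ⟨x, hx⟩).2
    omega
  refine ⟨k - 1, r, σ, τ, ?_, ?_, ?_, ?_, ?_, ?_, ?_, ?_, ?_, ?_, ?_⟩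
  · -- r strictly monotone
    intro i hi
    have h1 : i < k := by omega
    have h2 : i + 1 < k := by omega
    rw [hr]
    simp only [dif_pos h1, dif_pos h2]
    exact Subtype.coe_lt_coe.mpr (e.strictMono (by simp [Fin.lt_def]))
  · rw [hr]; simp only [dif_pos hk]; exact h0a
  · rw [hr]; simp only [dif_pos hkN]; exact hNb
  · rw [hσ]; simp only [dif_pos (htiA 0 (Nat.zero_le n))]
    exact symm0 _ _ ht0
  · rw [hσ]; simp only [dif_pos (htiA n le_rfl)]
    exact symmN _ _ htn
  · -- σ strictly monotone
    intro i hi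
    rw [hσ]
    simp only [dif_pos (htiA i (by omega)), dif_pos (htiA (i+1) (by omega))]
    have h1 : (⟨t i, htiA i (by omega)⟩ : A) < ⟨t (i+1), htiA (i+1) (by omega)⟩ := by
      rw [← Subtype.coe_lt_coe]
      exact htmono i hi
    have h2 := e.symm.strictMono h1
    simpa [Fin.lt_def] using h2
  · -- r (σ i) = t i
    intro i hi
    rw [hσ, hr]
    simp only [dif_pos (htiA i hi)]
    have hlt : ((e.symm ⟨t i, htiA i hi⟩ : Fin k) : ℕ) < k := (e.symm ⟨t i, htiA i hi⟩).2
    rw [dif_pos hlt]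
    have : (⟨((e.symm ⟨t i, htiA i hi⟩ : Fin k) : ℕ), hlt⟩ : Fin k)
        = e.symm ⟨t i, htiA i hi⟩ := by
      apply Fin.ext; rfl
    rw [this, e.apply_symm_apply]
  · rw [hτ]; simp only [dif_pos (hsiA 0 (Nat.zero_le m))]
    exact symm0 _ _ hs0
  · rw [hτ]; simp only [dif_pos (hsiA m le_rfl)]
    exact symmN _ _ hsm
  · intro i hi
    rw [hτ]
    simp only [dif_pos (hsiA i (by omega)), dif_pos (hsiA (i+1) (by omega))]
    have h1 : (⟨s i, hsiA i (by omega)⟩ : A) < ⟨s (i+1), hsiA (i+1) (by omega)⟩ := by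
      rw [← Subtype.coe_lt_coe]
      exact hsmono i hi
    have h2 := e.symm.strictMono h1
    simpa [Fin.lt_def] using h2
  · intro i hi
    rw [hτ, hr]
    simp only [dif_pos (hsiA i hi)]
    have hlt : ((e.symm ⟨s i, hsiA i hi⟩ : Fin k) : ℕ) < k := (e.symm ⟨s i, hsiA i hi⟩).2
    rw [dif_pos hlt]
    have : (⟨((e.symm ⟨s i, hsiA i hi⟩ : Fin k) : ℕ), hlt⟩ : Fin k)
        = e.symm ⟨s i, hsiA i hi⟩ := by
      apply Fin.ext; rfl
    rw [this, e.apply_symm_apply]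

lemma mesh_sum_bound {θ δ : ℝ} (hθ : 1 < θ) (hδ : 0 < δ) (n : ℕ) (t : ℕ → ℝ)
    (hmono : ∀ i < n, t i < t (i+1)) (hmesh : ∀ i < n, t (i+1) - t i < δ) :
    ∑ i ∈ Finset.range n, (t (i+1) - t i) ^ θ ≤ δ ^ (θ - 1) * (t n - t 0) := by
  have h1 : ∀ i ∈ Finset.range n, (t (i+1) - t i) ^ θ ≤ δ ^ (θ-1) * (t (i+1) - t i) := by
    intro i hi
    have hi' := Finset.mem_range.mp hi
    have hx0 : 0 < t (i+1) - t i := by linarith [hmono i hi']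
    have e1 : (t (i+1) - t i) ^ θ = (t (i+1) - t i) ^ (θ-1) * (t (i+1) - t i) := by
      rw [show θ = (θ-1) + 1 from by ring, Real.rpow_add' hx0.le (by linarith)]
      rw [Real.rpow_one]
      ring_nf
    rw [e1]
    refine mul_le_mul_of_nonneg_right ?_ hx0.le
    exact Real.rpow_le_rpow hx0.le (le_of_lt (hmesh i hi')) (by linarith)
  calc ∑ i ∈ Finset.range n, (t (i+1) - t i) ^ θ
      ≤ ∑ i ∈ Finset.range n, δ ^ (θ-1) * (t (i+1) - t i) := Finset.sum_le_sum h1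
    _ = δ ^ (θ-1) * ∑ i ∈ Finset.range n, (t (i+1) - t i) := by rw [Finset.mul_sum]
    _ = δ ^ (θ-1) * (t n - t 0) := by rw [Finset.sum_range_sub]

end YoungAux

open YoungAux in
theorem young_integral_tagged_riemann_sums
    (a b : ℝ) (hab : a < b) (lam μ : ℝ)
    (hlam0 : 0 < lam) (hlam1 : lam ≤ 1) (hμ0 : 0 < μ) (hμ1 : μ ≤ 1)
    (hsum : 1 < lam + μ)
    (f g : ℝ → ℝ) (hf : HolderOn f a b lam) (hg : HolderOn g a b μ) :
    ∃ I : ℝ, IsYoungIntegral f g a b I ∧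
      ∀ ε > 0, ∃ δ > 0, ∀ (n : ℕ) (t ξ : ℕ → ℝ),
        t 0 = a → t n = b → (∀ i < n, t i < t (i + 1)) → (∀ i < n, t (i + 1) - t i < δ) →
        (∀ i < n, ξ i ∈ Icc (t i) (t (i + 1))) →
        |(∑ i ∈ Finset.range n, f (ξ i) * (g (t (i + 1)) - g (t i))) - I| < ε := by
  classical
  obtain ⟨Cf0, hf0⟩ := hf
  obtain ⟨Cg0, hg0⟩ := hg
  set Cf : ℝ := max Cf0 0 with hCfd
  set Cg : ℝ := max Cg0 0 with hCgd
  have hCf : 0 ≤ Cf := le_max_right _ _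
  have hCg : 0 ≤ Cg := le_max_right _ _
  have hf' : ∀ s ∈ Icc a b, ∀ u ∈ Icc a b, |f u - f s| ≤ Cf * |u - s| ^ lam := by
    intro s hs u hu
    refine le_trans ?_ (mul_le_mul_of_nonneg_right (le_max_left Cf0 0)
      (Real.rpow_nonneg (abs_nonneg _) _))
    simpa [Real.norm_eq_abs] using hf0 s hs u hu
  have hg' : ∀ s ∈ Icc a b, ∀ u ∈ Icc a b, |g u - g s| ≤ Cg * |u - s| ^ μ := by
    intro s hs u hu
    refine le_trans ?_ (mul_le_mul_of_nonneg_right (le_max_left Cg0 0)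
      (Real.rpow_nonneg (abs_nonneg _) _))
    simpa [Real.norm_eq_abs] using hg0 s hs u hu
  set θ : ℝ := lam + μ with hθd
  have hθ1 : 1 < θ := hsum
  set K : ℝ := Kc Cf Cg θ with hKd
  have hK : 0 ≤ K := Kc_nonneg hCf hCg
  have hba : (0:ℝ) < b - a := by linarith
  -- dyadic partitions
  set u : ℕ → ℕ → ℝ := fun K i => a + (b - a) * i / 2 ^ K with hud
  have hu0 : ∀ Kn, u Kn 0 = a := by intro Kn; simp [hud]
  have hun : ∀ Kn, u Kn (2 ^ Kn) = b := by
    intro Kn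
    have h2 : ((2:ℝ)) ^ Kn ≠ 0 := by positivity
    simp only [hud]
    push_cast
    field_simp
    ring
  have hugap : ∀ Kn i, u Kn (i+1) - u Kn i = (b - a) / 2 ^ Kn := by
    intro Kn i
    have h2 : ((2:ℝ)) ^ Kn ≠ 0 := by positivity
    simp only [hud]
    push_cast
    field_simp
    ring
  have humono : ∀ Kn, ∀ i < 2 ^ Kn, u Kn i < u Kn (i+1) := by
    intro Kn i _
    refine sub_pos.mp ?_
    rw [hugap Kn i]
    positivity
  have humem : ∀ Kn, ∀ i ≤ 2 ^ Kn, u Kn i ∈ Icc a b := by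
    intro Kn
    exact part_mem (humono Kn) (by rw [hu0 Kn]; exact ⟨le_rfl, hab.le⟩)
      (by rw [hun Kn]; exact ⟨hab.le, le_rfl⟩)
  set S : ℕ → ℝ := fun Kn => RS f g (u Kn) (2 ^ Kn) with hSd
  set ρ : ℝ := (2:ℝ) ^ (1 - θ) with hρd
  have hρ0 : 0 ≤ ρ := Real.rpow_nonneg (by norm_num) _
  have hρ1 : ρ < 1 := Real.rpow_lt_one_of_one_lt_of_neg one_lt_two (by linarith)
  -- dyadic gap-power sum
  have hdy : ∀ Kn : ℕ, ∑ i ∈ Finset.range (2 ^ Kn), (u Kn (i+1) - u Kn i) ^ θ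
      = (b - a) ^ θ * ρ ^ Kn := by
    intro Kn
    have h2K : (0:ℝ) < 2 ^ Kn := by positivity
    have e1 : ∑ i ∈ Finset.range (2 ^ Kn), (u Kn (i+1) - u Kn i) ^ θ
        = (2 ^ Kn : ℝ) * ((b - a) / 2 ^ Kn) ^ θ := by
      rw [Finset.sum_congr rfl (fun i _ => by rw [hugap Kn i])]
      rw [Finset.sum_const, Finset.card_range, nsmul_eq_mul]
      push_cast
      ring
    rw [e1, Real.div_rpow hba.le h2K.le]
    have h3 : ((2:ℝ) ^ Kn) / ((2:ℝ) ^ Kn) ^ θ = ρ ^ Kn := by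
      rw [← Real.rpow_natCast 2 Kn, ← Real.rpow_natCast ρ Kn, hρd]
      rw [← Real.rpow_mul (by norm_num : (0:ℝ) ≤ 2)]
      rw [← Real.rpow_mul (by norm_num : (0:ℝ) ≤ 2)]
      rw [← Real.rpow_sub (by norm_num : (0:ℝ) < 2)]
      congr 1
      ring
    calc (2 ^ Kn : ℝ) * ((b - a) ^ θ / ((2:ℝ) ^ Kn) ^ θ)
        = (b - a) ^ θ * (((2:ℝ) ^ Kn) / ((2:ℝ) ^ Kn) ^ θ) := by ring
      _ = (b - a) ^ θ * ρ ^ Kn := by rw [h3]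
  -- Cauchy along dyadic partitions
  have hSdist : ∀ Kn : ℕ, dist (S Kn) (S (Kn+1)) ≤ (K * (b-a) ^ θ) * ρ ^ Kn := by
    intro Kn
    have hhalf : ∀ i : ℕ, u (Kn+1) (2*i) = u Kn i := by
      intro i
      have h2 : ((2:ℝ)) ^ Kn ≠ 0 := by positivity
      simp only [hud, pow_succ]
      push_cast
      field_simp
    have hσmN : (2:ℕ) * 2 ^ Kn = 2 ^ (Kn+1) := by rw [Nat.pow_succ]; ring
    have hest := refine_est hCf hCg hlam0 hμ0 hθ1 hf' hg' (2 ^ Kn) (fun i => 2*i)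
      (2 ^ (Kn+1)) (u (Kn+1)) (humono (Kn+1)) (humem (Kn+1)) (by simp)
      (by simpa using hσmN) (fun i _ => by show 2*i < 2*(i+1); omega)
    have ec : RS f g (fun i => u (Kn+1) (2*i)) (2 ^ Kn) = RS f g (u Kn) (2 ^ Kn) := by
      rw [RS, RS]
      refine Finset.sum_congr rfl fun i _ => ?_
      simp only [hhalf]
    rw [ec] at hest
    have ed : ∑ i ∈ Finset.range (2 ^ Kn),
        (u (Kn+1) (2*(i+1)) - u (Kn+1) (2*i)) ^ θ = (b - a) ^ θ * ρ ^ Kn := by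
      rw [← hdy Kn]
      refine Finset.sum_congr rfl fun i _ => ?_
      simp only [hhalf]
    rw [ed] at hest
    rw [Real.dist_eq, abs_sub_comm]
    calc |S (Kn+1) - S Kn| = |RS f g (u (Kn+1)) (2 ^ (Kn+1)) - RS f g (u Kn) (2 ^ Kn)| := rfl
      _ ≤ K * ((b - a) ^ θ * ρ ^ Kn) := hest
      _ = (K * (b - a) ^ θ) * ρ ^ Kn := by ring
  have hcauchy : CauchySeq S := cauchySeq_of_le_geometric ρ (K * (b-a)^θ) hρ1 hSdist
  obtain ⟨I, hI⟩ := cauchySeq_tendsto_of_complete hcauchy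
  -- main estimate for any fine partition
  have hmain : ∀ δ : ℝ, 0 < δ → ∀ (n : ℕ) (t : ℕ → ℝ), t 0 = a → t n = b →
      (∀ i < n, t i < t (i+1)) → (∀ i < n, t (i+1) - t i < δ) →
      |RS f g t n - I| ≤ K * (δ ^ (θ-1) * (b-a)) := by
    intro δ hδ n t h0 hn hmono hmesh
    have key : ∀ Kn : ℕ, |RS f g t n - I|
        ≤ K * (δ ^ (θ-1) * (b-a)) + (K * (b-a)^θ) * ρ ^ Kn + |S Kn - I| := by
      intro Kn
      obtain ⟨N, r, σ, τ, hrmono, hr0, hrN, hσ0, hσn, hσmono, hσval, hτ0, hτm, hτmono, hτval⟩ :=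
        exists_common h0 hn (hu0 Kn) (hun Kn) hmono (humono Kn)
      have hrmem : ∀ i ≤ N, r i ∈ Icc a b :=
        part_mem hrmono (by rw [hr0]; exact ⟨le_rfl, hab.le⟩)
          (by rw [hrN]; exact ⟨hab.le, le_rfl⟩)
      have est1 := refine_est hCf hCg hlam0 hμ0 hθ1 hf' hg' n σ N r hrmono hrmem hσ0 hσn hσmono
      have ecσ : RS f g (fun i => r (σ i)) n = RS f g t n := by
        rw [RS, RS]
        refine Finset.sum_congr rfl fun i hi => ?_
        have hi' := Finset.mem_range.mp hi
        rw [hσval i (by omega), hσval (i+1) (by omega)]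
      have esσ : ∑ i ∈ Finset.range n, (r (σ (i+1)) - r (σ i)) ^ θ
          ≤ δ ^ (θ-1) * (b-a) := by
        have e2 : ∑ i ∈ Finset.range n, (r (σ (i+1)) - r (σ i)) ^ θ
            = ∑ i ∈ Finset.range n, (t (i+1) - t i) ^ θ := by
          refine Finset.sum_congr rfl fun i hi => ?_
          have hi' := Finset.mem_range.mp hi
          rw [hσval i (by omega), hσval (i+1) (by omega)]
        rw [e2]
        have e3 := mesh_sum_bound hθ1 hδ n t hmono hmesh
        rw [h0, hn] at e3
        exact e3
      rw [ecσ] at est1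
      have est1' : |RS f g r N - RS f g t n| ≤ K * (δ ^ (θ-1) * (b-a)) :=
        est1.trans (mul_le_mul_of_nonneg_left esσ hK)
      have est2 := refine_est hCf hCg hlam0 hμ0 hθ1 hf' hg' (2 ^ Kn) τ N r hrmono hrmem
        hτ0 hτm hτmono
      have ecτ : RS f g (fun i => r (τ i)) (2 ^ Kn) = S Kn := by
        show RS f g (fun i => r (τ i)) (2 ^ Kn) = RS f g (u Kn) (2 ^ Kn)
        rw [RS, RS]
        refine Finset.sum_congr rfl fun i hi => ?_
        have hi' := Finset.mem_range.mp hi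
        rw [hτval i (by omega), hτval (i+1) (by omega)]
      have esτ : ∑ i ∈ Finset.range (2 ^ Kn), (r (τ (i+1)) - r (τ i)) ^ θ
          = (b-a)^θ * ρ ^ Kn := by
        rw [← hdy Kn]
        refine Finset.sum_congr rfl fun i hi => ?_
        have hi' := Finset.mem_range.mp hi
        rw [hτval i (by omega), hτval (i+1) (by omega)]
      rw [ecτ, esτ] at est2
      calc |RS f g t n - I|
          ≤ |RS f g t n - S Kn| + |S Kn - I| := abs_sub_le _ _ _
        _ ≤ (|RS f g t n - RS f g r N| + |RS f g r N - S Kn|) + |S Kn - I| :=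
            add_le_add_left (abs_sub_le _ _ _) _
        _ ≤ (K * (δ ^ (θ-1) * (b-a)) + (K * (b-a)^θ) * ρ ^ Kn) + |S Kn - I| := by
            refine add_le_add_left (add_le_add ?_ ?_) _
            · rw [abs_sub_comm]; exact est1'
            · exact est2.trans (le_of_eq (by ring))
        _ = _ := by ring
    have hlim : Tendsto
        (fun Kn : ℕ => K * (δ ^ (θ-1) * (b-a)) + (K * (b-a)^θ) * ρ ^ Kn + |S Kn - I|)
        atTop (𝓝 (K * (δ ^ (θ-1) * (b-a)) + (K * (b-a)^θ) * 0 + 0)) := by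
      refine Tendsto.add (Tendsto.add tendsto_const_nhds ?_) ?_
      · exact (tendsto_pow_atTop_nhds_zero_of_lt_one hρ0 hρ1).const_mul _
      · have h1 : Tendsto (fun Kn => S Kn - I) atTop (𝓝 (I - I)) := hI.sub tendsto_const_nhds
        rw [sub_self] at h1
        simpa using h1.abs
    have := ge_of_tendsto' hlim key
    simpa using this
  -- tags change the sum only a little
  have htag : ∀ δ : ℝ, 0 < δ → ∀ (n : ℕ) (t ξ : ℕ → ℝ), t 0 = a → t n = b →
      (∀ i < n, t i < t (i+1)) → (∀ i < n, t (i+1) - t i < δ) →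
      (∀ i < n, ξ i ∈ Icc (t i) (t (i+1))) →
      |(∑ i ∈ Finset.range n, f (ξ i) * (g (t (i+1)) - g (t i))) - RS f g t n|
        ≤ Cf * Cg * (δ ^ (θ-1) * (b-a)) := by
    intro δ hδ n t ξ h0 hn hmono hmesh hξ
    have hmem : ∀ i ≤ n, t i ∈ Icc a b :=
      part_mem hmono (by rw [h0]; exact ⟨le_rfl, hab.le⟩)
        (by rw [hn]; exact ⟨hab.le, le_rfl⟩)
    have hterm : ∀ i ∈ Finset.range n,
        |f (ξ i) * (g (t (i+1)) - g (t i)) - (g (t (i+1)) - g (t i)) * f (t i)|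
          ≤ Cf * Cg * (t (i+1) - t i) ^ θ := by
      intro i hi
      have hi' := Finset.mem_range.mp hi
      have hξi := hξ i hi'
      have hξmem : ξ i ∈ Icc a b :=
        ⟨(hmem i (by omega)).1.trans hξi.1, hξi.2.trans (hmem (i+1) (by omega)).2⟩
      have hgap : 0 < t (i+1) - t i := by linarith [hmono i hi']
      have e1 : f (ξ i) * (g (t (i+1)) - g (t i)) - (g (t (i+1)) - g (t i)) * f (t i)
          = (g (t (i+1)) - g (t i)) * (f (ξ i) - f (t i)) := by ring
      rw [e1, abs_mul]
      have hgb : |g (t (i+1)) - g (t i)| ≤ Cg * (t (i+1) - t i) ^ μ := by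
        refine (hg' _ (hmem i (by omega)) _ (hmem (i+1) (by omega))).trans ?_
        rw [abs_of_nonneg (by linarith : (0:ℝ) ≤ t (i+1) - t i)]
      have hfb : |f (ξ i) - f (t i)| ≤ Cf * (t (i+1) - t i) ^ lam := by
        refine (hf' _ (hmem i (by omega)) _ hξmem).trans ?_
        refine mul_le_mul_of_nonneg_left ?_ hCf
        refine Real.rpow_le_rpow (abs_nonneg _) ?_ hlam0.le
        rw [abs_of_nonneg (by linarith [hξi.1] : (0:ℝ) ≤ ξ i - t i)]
        linarith [hξi.2]
      calc |g (t (i+1)) - g (t i)| * |f (ξ i) - f (t i)|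
          ≤ (Cg * (t (i+1) - t i) ^ μ) * (Cf * (t (i+1) - t i) ^ lam) :=
            mul_le_mul hgb hfb (abs_nonneg _) (by positivity)
        _ = Cf * Cg * ((t (i+1) - t i) ^ lam * (t (i+1) - t i) ^ μ) := by ring
        _ = Cf * Cg * (t (i+1) - t i) ^ θ := by
            rw [hθd, Real.rpow_add' hgap.le (by rw [← hθd]; linarith)]
    calc |(∑ i ∈ Finset.range n, f (ξ i) * (g (t (i+1)) - g (t i))) - RS f g t n|
        = |∑ i ∈ Finset.range n,
            (f (ξ i) * (g (t (i+1)) - g (t i)) - (g (t (i+1)) - g (t i)) * f (t i))| := by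
          rw [RS, ← Finset.sum_sub_distrib]
      _ ≤ ∑ i ∈ Finset.range n,
            |f (ξ i) * (g (t (i+1)) - g (t i)) - (g (t (i+1)) - g (t i)) * f (t i)| :=
          Finset.abs_sum_le_sum_abs _ _
      _ ≤ ∑ i ∈ Finset.range n, Cf * Cg * (t (i+1) - t i) ^ θ := Finset.sum_le_sum hterm
      _ = Cf * Cg * ∑ i ∈ Finset.range n, (t (i+1) - t i) ^ θ := by rw [Finset.mul_sum]
      _ ≤ Cf * Cg * (δ ^ (θ-1) * (b-a)) := by
          refine mul_le_mul_of_nonneg_left ?_ (mul_nonneg hCf hCg)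
          have e3 := mesh_sum_bound hθ1 hδ n t hmono hmesh
          rw [h0, hn] at e3
          exact e3
  -- choose δ
  set M : ℝ := (K + Cf * Cg) * (b - a) with hMd
  have hM0 : 0 ≤ M := mul_nonneg (add_nonneg hK (mul_nonneg hCf hCg)) hba.le
  have main : ∀ ε > 0, ∃ δ > 0, ∀ (n : ℕ) (t ξ : ℕ → ℝ),
      t 0 = a → t n = b → (∀ i < n, t i < t (i + 1)) → (∀ i < n, t (i + 1) - t i < δ) →
      (∀ i < n, ξ i ∈ Icc (t i) (t (i + 1))) →
      |(∑ i ∈ Finset.range n, f (ξ i) * (g (t (i + 1)) - g (t i))) - I| < ε := by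
    intro ε hε
    set η : ℝ := min 1 (ε / (M + 1)) with hηd
    have hη0 : 0 < η := lt_min one_pos (div_pos hε (by linarith))
    set δ : ℝ := η ^ (θ - 1)⁻¹ with hδd
    have hδ0 : 0 < δ := Real.rpow_pos_of_pos hη0 _
    have hδθ : δ ^ (θ - 1) = η := by
      rw [hδd, ← Real.rpow_mul hη0.le, inv_mul_cancel₀ (by linarith : θ - 1 ≠ 0),
        Real.rpow_one]
    refine ⟨δ, hδ0, ?_⟩
    intro n t ξ h0 hn hmono hmesh hξ
    have h1 := hmain δ hδ0 n t h0 hn hmono hmesh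
    have h2 := htag δ hδ0 n t ξ h0 hn hmono hmesh hξ
    rw [hδθ] at h1 h2
    have h3 : K * (η * (b-a)) + Cf * Cg * (η * (b-a)) = M * η := by rw [hMd]; ring
    have h4 : M * η < ε := by
      have h5 : η ≤ ε / (M + 1) := min_le_right _ _
      have h6 : M * η ≤ M * (ε / (M + 1)) := mul_le_mul_of_nonneg_left h5 hM0
      have h7 : M * (ε / (M + 1)) < ε := by
        rw [show M * (ε / (M + 1)) = M * ε / (M + 1) from by ring,
          div_lt_iff₀ (by linarith : (0:ℝ) < M + 1)]
        nlinarith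
      linarith
    have h8 := abs_sub_le (∑ i ∈ Finset.range n, f (ξ i) * (g (t (i+1)) - g (t i)))
      (RS f g t n) I
    linarith
  refine ⟨I, ?_, main⟩
  intro ε hε
  obtain ⟨δ, hδ0, hδ⟩ := main ε hε
  refine ⟨δ, hδ0, ?_⟩
  intro n t h0 hn hmono hmesh
  have h9 := hδ n t t h0 hn hmono hmesh (fun i hi => ⟨le_rfl, (hmono i hi).le⟩)
  rw [Real.norm_eq_abs]
  have e : (∑ i ∈ Finset.range n, (g (t (i+1)) - g (t i)) • f (t i))
      = ∑ i ∈ Finset.range n, f (t i) * (g (t (i+1)) - g (t i)) :=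
    Finset.sum_congr rfl fun i _ => by rw [smul_eq_mul, mul_comm]
  rw [e]
  exact h9
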